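/- For a function f : [0,∞) → ℝ and c > 0, define the truncated variation TV^c(f,[0,t]) = sup over partitions 0 ≤ t_0 < ... < t_n ≤ t of ∑_{i=1}^n max(|f(t_i) − f(t_{i-1})| − c, 0). If g : [0,t] → ℝ satisfies sup_{s∈[0,t]} |g(s) − f(s)| ≤ c/2, then TV(g,[0,t]) ≥ TV^c(f,[0,t]). -/

import Mathlib

open scoped ENNReal
open Filter

/-- `u : Fin (n+1) → ℝ` is a partition `0 ≤ t₀ < t₁ < ... < tₙ ≤ t`. -/
def IsPartition (t : ℝ) {n : ℕ} (u : Fin (n + 1) → ℝ) : Prop :=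
  StrictMono u ∧ 0 ≤ u 0 ∧ u (Fin.last n) ≤ t

/-- The sum `∑ |h(tᵢ) − h(tᵢ₋₁)|^p` along a partition. -/
noncomputable def pVarSum (h : ℝ → ℝ) (p : ℝ) {n : ℕ} (u : Fin (n + 1) → ℝ) : ℝ :=
  ∑ i : Fin n, |h (u i.succ) - h (u i.castSucc)| ^ p

/-- The `p`-variation of `h` on `[0,t]`: the supremum over all partitions. -/
noncomputable def pVar (h : ℝ → ℝ) (p t : ℝ) : ℝ≥0∞ :=
  ⨆ (n : ℕ) (u : Fin (n + 1) → ℝ) (_ : IsPartition t u), ENNReal.ofReal (pVarSum h p u)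

/-- The truncated variation `TV^c(f,[0,t])`: the supremum over partitions of
`∑ max(|f(tᵢ) − f(tᵢ₋₁)| − c, 0)`. -/
noncomputable def truncVar (f : ℝ → ℝ) (c t : ℝ) : ℝ≥0∞ :=
  ⨆ (n : ℕ) (u : Fin (n + 1) → ℝ) (_ : IsPartition t u),
    ENNReal.ofReal (∑ i : Fin n, max (|f (u i.succ) - f (u i.castSucc)| - c) 0)

/-- If `g` is uniformly within `c/2` of `f` on `[0,t]`, then the total variation of `g`
dominates the truncated variation `TV^c(f,[0,t])`. -/
theorem truncVar_le_TV_of_close (f g : ℝ → ℝ) (c t : ℝ) (hc : 0 < c)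
    (hclose : ∀ s ∈ Set.Icc (0 : ℝ) t, |g s - f s| ≤ c / 2) :
    truncVar f c t ≤ pVar g 1 t := by
  refine iSup_le fun n => iSup_le fun u => iSup_le fun hu => ?_
  refine le_trans ?_ (le_iSup_of_le n (le_iSup_of_le u (le_iSup_of_le hu le_rfl)))
  apply ENNReal.ofReal_le_ofReal
  unfold pVarSum
  have hmem : ∀ i : Fin (n + 1), u i ∈ Set.Icc (0 : ℝ) t := by
    intro i
    exact ⟨le_trans hu.2.1 (hu.1.monotone (Fin.zero_le i)),
      le_trans (hu.1.monotone (Fin.le_last i)) hu.2.2⟩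
  refine Finset.sum_le_sum fun i _ => ?_
  rw [Real.rpow_one]
  refine max_le ?_ (abs_nonneg _)
  have h1 := hclose _ (hmem i.succ)
  have h2 := hclose _ (hmem i.castSucc)
  have key : |f (u i.succ) - f (u i.castSucc)| ≤
      |g (u i.succ) - g (u i.castSucc)| + c := by
    have : f (u i.succ) - f (u i.castSucc) =
        (g (u i.succ) - g (u i.castSucc)) - (g (u i.succ) - f (u i.succ))
          + (g (u i.castSucc) - f (u i.castSucc)) := by ring
    rw [this]
    calc _ ≤ |(g (u i.succ) - g (u i.castSucc)) - (g (u i.succ) - f (u i.succ))|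
          + |g (u i.castSucc) - f (u i.castSucc)| := abs_add_le _ _
      _ ≤ (|g (u i.succ) - g (u i.castSucc)| + |g (u i.succ) - f (u i.succ)|)
          + |g (u i.castSucc) - f (u i.castSucc)| := by
            gcongr; exact abs_sub _ _
      _ ≤ |g (u i.succ) - g (u i.castSucc)| + c := by linarith
  linarith
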